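/- arXiv:1311.4766 — 2 statements merged into one kernel-verified Lean document; each statement's English description precedes it below -/
import Mathlib

section
/- Let Γ = (N, A, u) be a normal form game in which all players have the same strategy set. The following conditions are equivalent: (i) Γ is fully symmetric, i.e., for each i ∈ N and π ∈ S_N, u_i = u_{π(i)} ∘ π; (ii) Γ is standard symmetric (there exists a transitive subgroup H of S_N such that for each i ∈ N and π ∈ H, u_i = u_{π(i)} ∘ π) and weakly anonymous (for each i ∈ N and each permutation π of N fixing i, u_i = u_i ∘ π); (iii) for each i ∈ N and π ∈ S_N, u_{π(i)} = u_i ∘ π⁻¹; (iv) for each i ∈ N and each transposition τ of N, u_i = u_{τ(i)} ∘ τ; (v) for each i ∈ N and each transposition τ of N, u_i = u_{τ(i)} ∘ τ⁻¹. -/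
def permAct {N A : Type*} (π : Equiv.Perm N) (s : N → A) : N → A :=
  fun i => s (π⁻¹ i)

lemma permAct_one {N A : Type*} (s : N → A) : permAct 1 s = s := rfl

lemma permAct_mul {N A : Type*} (π σ : Equiv.Perm N) (s : N → A) :
    permAct (π * σ) s = permAct π (permAct σ s) := by
  funext i; simp [permAct, mul_inv_rev]

lemma permAct_inv_cancel {N A : Type*} (π : Equiv.Perm N) (s : N → A) :
    permAct π (permAct π⁻¹ s) = s := by
  rw [← permAct_mul, mul_inv_cancel, permAct_one]

lemma permAct_cancel_inv {N A : Type*} (π : Equiv.Perm N) (s : N → A) :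
    permAct π⁻¹ (permAct π s) = s := by
  rw [← permAct_mul, inv_mul_cancel, permAct_one]

/-- Equivalent characterisations of full symmetry for a game in which all players
share the strategy set `A`:
(i) `u_i = u_{π(i)} ∘ π` for all `i` and all `π ∈ S_N`;
(ii) standard symmetric (invariance under some transitive subgroup `H ≤ S_N`)
and weakly anonymous (`u_i = u_i ∘ π` for every `π` fixing `i`);
(iii) `u_{π(i)} = u_i ∘ π⁻¹` for all `i, π`;
(iv) `u_i = u_{τ(i)} ∘ τ` for all `i` and all transpositions `τ`;
(v) `u_i = u_{τ(i)} ∘ τ⁻¹` for all `i` and all transpositions `τ`. -/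
theorem fully_symmetric_tfae {N A : Type*} [Fintype N] [DecidableEq N]
    [Fintype A] [Nonempty A] (hN : 2 ≤ Fintype.card N) (u : N → (N → A) → ℝ) :
    List.TFAE [
      ∀ (i : N) (π : Equiv.Perm N), u i = fun s => u (π i) (permAct π s),
      (∃ H : Subgroup (Equiv.Perm N), (∀ i j : N, ∃ π ∈ H, π i = j) ∧
        ∀ i : N, ∀ π ∈ H, u i = fun s => u (π i) (permAct π s)) ∧
      (∀ (i : N) (π : Equiv.Perm N), π i = i → u i = fun s => u i (permAct π s)),
      ∀ (i : N) (π : Equiv.Perm N), u (π i) = fun s => u i (permAct π⁻¹ s),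
      ∀ (i j k : N), j ≠ k →
        u i = fun s => u (Equiv.swap j k i) (permAct (Equiv.swap j k) s),
      ∀ (i j k : N), j ≠ k →
        u i = fun s => u (Equiv.swap j k i) (permAct (Equiv.swap j k)⁻¹ s)
    ] := by
  tfae_have 1 → 3 := by
    intro h i π
    funext s
    have := congrFun (h i π) (permAct π⁻¹ s)
    simpa [permAct_inv_cancel] using this.symm
  tfae_have 3 → 1 := by
    intro h i π
    funext s
    have := congrFun (h i π) (permAct π s)
    simpa [permAct_cancel_inv] using this.symm
  tfae_have 1 → 4 := by
    intro h i j k hjk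
    exact h i (Equiv.swap j k)
  tfae_have 4 → 5 := by
    intro h i j k hjk
    simpa [Equiv.swap_inv] using h i j k hjk
  tfae_have 5 → 4 := by
    intro h i j k hjk
    simpa [Equiv.swap_inv] using h i j k hjk
  tfae_have 4 → 1 := by
    intro h i π
    refine Equiv.Perm.swap_induction_on π ?_ ?_
    · funext s; simp [permAct_one]
    · intro f x y hxy ih
      funext s
      have h1 := congrFun ih s
      have h2 := congrFun (h (f i) x y hxy) (permAct f s)
      rw [h1, h2]
      simp [permAct_mul]
  tfae_have 1 → 2 := by
    intro h
    refine ⟨⟨⊤, fun i j => ⟨Equiv.swap i j, Subgroup.mem_top _, Equiv.swap_apply_left i j⟩,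
      fun i π _ => h i π⟩, fun i π hπ => ?_⟩
    have := h i π
    rwa [hπ] at this
  tfae_have 2 → 1 := by
    rintro ⟨⟨H, htrans, hsym⟩, hanon⟩ i π
    obtain ⟨σ, hσH, hσ⟩ := htrans i (π i)
    funext s
    have h1 := congrFun (hsym i σ hσH) (permAct (σ⁻¹ * π) s)
    have h2 := congrFun (hanon i (σ⁻¹ * π) (by simp [Equiv.Perm.mul_apply, ← hσ])) s
    rw [h2, h1]
    rw [← permAct_mul]
    simp [hσ, mul_assoc]
  tfae_finish
end

section
/- Let Γ = (N, A, u) be a normal form game with n ≥ 3 players in which all players have the same strategy set. The following conditions are equivalent: (i) Γ is fully symmetric (for each i ∈ N and π ∈ S_N, u_i = u_{π(i)} ∘ π) and u_i = u_j for all i, j ∈ N; (ii) for each i ∈ N and π ∈ S_N, u_i = u_{π(i)} ∘ π⁻¹. -/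
/-- For a game with at least three players, full symmetry together with all players
having the same utility function is equivalent to the condition
`u_i = u_{π(i)} ∘ π⁻¹` for all `i ∈ N` and `π ∈ S_N`. -/
theorem fully_symmetric_common_utility_iff {N A : Type*} [Fintype N]
    [Fintype A] [Nonempty A] (hN : 3 ≤ Fintype.card N) (u : N → (N → A) → ℝ) :
    ((∀ (i : N) (π : Equiv.Perm N), u i = fun s => u (π i) (permAct π s)) ∧
      ∀ i j : N, u i = u j) ↔
    (∀ (i : N) (π : Equiv.Perm N), u i = fun s => u (π i) (permAct π⁻¹ s)) := by
  constructor
  · rintro ⟨hsym, hcom⟩ i π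
    have h1 := hsym i π⁻¹
    funext s
    rw [congrFun h1 s, hcom (π⁻¹ i) (π i)]
  · intro h
    have key : ∀ (i : N) (π : Equiv.Perm N) (s : N → A),
        u i s = u (π i) (fun a => s (π a)) := by
      intro i π s
      have h' := congrFun (h i π) s
      unfold permAct at h'
      simpa using h'
    have key2 : ∀ (i : N) (π ρ : Equiv.Perm N), u (ρ (π i)) = u (π (ρ i)) := by
      intro i π ρ
      funext t
      set s : N → A := fun a => t ((π * ρ)⁻¹ a) with hs
      have e1 : u i s = u (ρ (π i)) (fun b => s (π (ρ b))) := by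
        rw [key i π s, key (π i) ρ]
      have e2 : u i s = u (π (ρ i)) (fun a => s (π (ρ a))) := by
        simpa using key i (π * ρ) s
      have e3 : (fun a => s (π (ρ a))) = t := by
        funext a; simp [hs]
      rw [e3] at e1 e2
      rw [← e1, e2]
    have hcom : ∀ a b : N, u a = u b := by
      intro a b
      obtain ⟨c, hca, hcb⟩ : ∃ c : N, c ≠ a ∧ c ≠ b := by
        classical
        have hcard : ({a, b} : Finset N).card ≤ 2 := by
          apply le_trans (Finset.card_insert_le _ _); simp
        have hne : ({a, b} : Finset N) ≠ Finset.univ := by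
          intro he
          rw [he, Finset.card_univ] at hcard
          omega
        obtain ⟨c, _, hc⟩ :=
          Finset.exists_of_ssubset ((Finset.subset_univ _).ssubset_of_ne hne)
        exact ⟨c, by simpa using hc⟩
      classical
      have := key2 c (Equiv.swap a b) (Equiv.swap a c)
      simpa [Equiv.swap_apply_of_ne_of_ne hca hcb, Equiv.swap_apply_right,
        Equiv.swap_apply_left] using this
    refine ⟨?_, hcom⟩
    intro i π
    funext s
    have := key i π⁻¹ s
    rw [this, hcom (π⁻¹ i) (π i)]
    rfl
end
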